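/- The empty network on n ≥ 3 countries is war-stable (under NN-vulnerability) if and only if M({j,k}) ≤ γ({j,k},{i})·M_i for all distinct countries i, j, k. -/

import Mathlib

open Finset

/-- The allies (neighbors) of `i` in network `g`, as a `Finset`. -/
noncomputable def nbrs {V : Type*} [Fintype V] (g : SimpleGraph V) (i : V) : Finset V :=
  @Finset.filter _ (fun j => g.Adj i j) (Classical.decPred _) Finset.univ

/-- The network `g` with the alliance `jk` added. -/
def addE {V : Type*} (g : SimpleGraph V) (j k : V) : SimpleGraph V :=
  g ⊔ SimpleGraph.fromEdgeSet {s(j, k)}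

/-- The network `g` with the alliance `jk` deleted. -/
def delE {V : Type*} (g : SimpleGraph V) (j k : V) : SimpleGraph V :=
  g.deleteEdges {s(j, k)}

/-- Country `i` is (NN-)vulnerable at network `g`: some aggressor `j` together with a
coalition `C` of its allies can defeat `i` and its remaining allies. -/
def Vul {V : Type*} [Fintype V] [DecidableEq V] (g : SimpleGraph V)
    (M : Finset V → ℝ) (γ : Finset V → Finset V → ℝ) (i : V) : Prop :=
  ∃ (j : V) (C : Finset V),
    C ⊆ insert j (nbrs g j) ∧ j ∈ C ∧ i ∉ C ∧
    γ C (insert i (nbrs g i \ C)) * M (insert i (nbrs g i \ C)) < M C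

/-- A network is war-stable: (S1) no country vulnerable; (S2) no country vulnerable after
adding any non-link; (S3) both endpoints of any link become vulnerable upon its deletion. -/
def WarStable {V : Type*} [Fintype V] [DecidableEq V] (g : SimpleGraph V)
    (M : Finset V → ℝ) (γ : Finset V → Finset V → ℝ) : Prop :=
  (∀ v : V, ¬ Vul g M γ v) ∧
  (∀ j k : V, j ≠ k → ¬ g.Adj j k → ∀ v : V, ¬ Vul (addE g j k) M γ v) ∧
  (∀ j k : V, g.Adj j k → Vul (delE g j k) M γ j ∧ Vul (delE g j k) M γ k)

open Finset

section Aux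
variable {V : Type*} [Fintype V] [DecidableEq V]

lemma mem_nbrs {g : SimpleGraph V} {i x : V} : x ∈ nbrs g i ↔ g.Adj i x := by
  simp [nbrs]

lemma nbrs_bot (i : V) : nbrs (⊥ : SimpleGraph V) i = ∅ := by
  ext x; simp [nbrs]

lemma addE_bot_adj {j k a b : V} (hjk : j ≠ k) :
    (addE (⊥ : SimpleGraph V) j k).Adj a b ↔ (a = j ∧ b = k) ∨ (a = k ∧ b = j) := by
  simp only [addE, SimpleGraph.sup_adj, SimpleGraph.bot_adj, false_or,
    SimpleGraph.fromEdgeSet_adj, Set.mem_singleton_iff, Sym2.eq_iff]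
  constructor
  · rintro ⟨h, -⟩; exact h
  · rintro h
    refine ⟨h, ?_⟩
    rcases h with ⟨rfl, rfl⟩ | ⟨rfl, rfl⟩
    · exact hjk
    · exact hjk.symm

lemma nbrs_addE_left {j k : V} (hjk : j ≠ k) :
    nbrs (addE (⊥ : SimpleGraph V) j k) j = {k} := by
  ext x
  rw [mem_nbrs, addE_bot_adj hjk]
  simp only [mem_singleton]
  constructor
  · rintro (⟨-, h⟩ | ⟨h, -⟩)
    · exact h
    · exact absurd h hjk
  · exact fun h => Or.inl ⟨trivial, h⟩

lemma nbrs_addE_right {j k : V} (hjk : j ≠ k) :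
    nbrs (addE (⊥ : SimpleGraph V) j k) k = {j} := by
  ext x
  rw [mem_nbrs, addE_bot_adj hjk]
  simp only [mem_singleton]
  constructor
  · rintro (⟨h, -⟩ | ⟨-, h⟩)
    · exact absurd h hjk.symm
    · exact h
  · exact fun h => Or.inr ⟨trivial, h⟩

lemma nbrs_addE_other {j k i : V} (hjk : j ≠ k) (hij : i ≠ j) (hik : i ≠ k) :
    nbrs (addE (⊥ : SimpleGraph V) j k) i = ∅ := by
  ext x
  simp [mem_nbrs, addE_bot_adj hjk, hij, hik]

lemma pair_cases {C : Finset V} {j k : V} (h : C ⊆ {j, k}) (hj : j ∈ C) :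
    C = {j} ∨ C = {j, k} := by
  by_cases hk : k ∈ C
  · right
    refine subset_antisymm h ?_
    intro x hx
    rcases mem_insert.1 hx with rfl | hx'
    · exact hj
    · exact mem_singleton.1 hx' ▸ hk
  · left
    have hsub : C ⊆ {j} := by
      intro x hx
      rcases mem_insert.1 (h hx) with rfl | hx'
      · exact mem_singleton_self _
      · exact absurd (mem_singleton.1 hx' ▸ hx) hk
    rcases Finset.subset_singleton_iff.1 hsub with rfl | rfl
    · exact absurd hj (notMem_empty _)
    · rfl

end Aux

section Key
variable {n : ℕ}

lemma key_ineq (hn : 3 ≤ n)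
    (M : Finset (Fin n) → ℝ) (γ : Finset (Fin n) → Finset (Fin n) → ℝ)
    (hM0 : ∀ C : Finset (Fin n), C.Nonempty → 0 ≤ M C)
    (hMmono : ∀ C C' : Finset (Fin n), C ⊆ C' → M C ≤ M C')
    (hγpos : ∀ C C' : Finset (Fin n), 0 < γ C C')
    (hγ1 : ∀ C C'' D : Finset (Fin n), C ⊆ C'' → γ C'' D ≤ γ C D)
    (hγ2 : ∀ C D D' : Finset (Fin n), D' ⊆ D → γ C D' ≤ γ C D)
    (H : ∀ i j k : Fin n, i ≠ j → j ≠ k → i ≠ k → M {j, k} ≤ γ {j, k} {i} * M {i})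
    {a i : Fin n} (hai : a ≠ i) {D : Finset (Fin n)} (hiD : i ∈ D) :
    M {a} ≤ γ {a} D * M D := by
  have hne : ({a, i} : Finset (Fin n)) ≠ Finset.univ := by
    intro h
    have h2 : (Finset.univ : Finset (Fin n)).card ≤ 2 :=
      h ▸ (Finset.card_insert_le a {i}).trans (by simp)
    rw [Finset.card_univ, Fintype.card_fin] at h2
    omega
  obtain ⟨b, -, hb⟩ := Finset.exists_of_ssubset (Finset.ssubset_univ_iff.2 hne)
  simp only [mem_insert, mem_singleton, not_or] at hb
  obtain ⟨hba, hbi⟩ := hb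
  calc M {a} ≤ M {a, b} := hMmono _ _ (by intro x hx; simp_all)
    _ ≤ γ {a, b} {i} * M {i} := H i a b hai.symm (fun h => hba h.symm) (fun h => hbi h.symm)
    _ ≤ γ {a} {i} * M {i} :=
        mul_le_mul_of_nonneg_right (hγ1 _ _ _ (by intro x hx; simp_all)) (hM0 _ ⟨i, by simp⟩)
    _ ≤ γ {a} {i} * M D :=
        mul_le_mul_of_nonneg_left (hMmono _ _ (by simpa)) (hγpos _ _).le
    _ ≤ γ {a} D * M D :=
        mul_le_mul_of_nonneg_right (hγ2 _ _ _ (by simpa)) (hM0 _ ⟨i, hiD⟩)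

end Key
theorem empty_war_stable_iff {n : ℕ} (hn : 3 ≤ n)
    (M : Finset (Fin n) → ℝ) (γ : Finset (Fin n) → Finset (Fin n) → ℝ)
    (hM0 : ∀ C : Finset (Fin n), C.Nonempty → 0 ≤ M C)
    (hMmono : ∀ C C' : Finset (Fin n), C ⊆ C' → M C ≤ M C')
    (hγpos : ∀ C C' : Finset (Fin n), 0 < γ C C')
    (hγ1 : ∀ C C'' D : Finset (Fin n), C ⊆ C'' → γ C'' D ≤ γ C D)
    (hγ2 : ∀ C D D' : Finset (Fin n), D' ⊆ D → γ C D' ≤ γ C D) :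
    WarStable (⊥ : SimpleGraph (Fin n)) M γ ↔
      ∀ i j k : Fin n, i ≠ j → j ≠ k → i ≠ k →
        M {j, k} ≤ γ {j, k} {i} * M {i} := by
  constructor
  · rintro ⟨-, hS2, -⟩ i j k hij hjk hik
    by_contra hlt
    push_neg at hlt
    apply hS2 j k hjk (by simp) i
    refine ⟨j, {j, k}, ?_, by simp, by simp [hij, hik], ?_⟩
    · rw [nbrs_addE_left hjk]
    · rw [nbrs_addE_other hjk hij hik]
      simpa using hlt
  · intro H
    refine ⟨?_, ?_, ?_⟩
    · rintro i ⟨a, C, hC, haC, hiC, hlt⟩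
      rw [nbrs_bot, insert_empty_eq] at hC
      rcases Finset.subset_singleton_iff.1 hC with rfl | rfl
      · exact absurd haC (notMem_empty _)
      have hai : a ≠ i := fun h => hiC (h ▸ haC)
      have := key_ineq hn M γ hM0 hMmono hγpos hγ1 hγ2 H hai
        (D := insert i (nbrs (⊥ : SimpleGraph (Fin n)) i \ {a})) (mem_insert_self _ _)
      exact absurd hlt (not_lt.2 this)
    · rintro j k hjk - i ⟨a, C, hC, haC, hiC, hlt⟩
      set g := addE (⊥ : SimpleGraph (Fin n)) j k with hg
      have pairC : C = {a} ∨ (C = {j, k} ∧ (a = j ∨ a = k)) := by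
        by_cases haj : a = j
        · subst haj
          rw [nbrs_addE_left hjk] at hC
          rcases pair_cases hC haC with h | h
          · exact Or.inl h
          · exact Or.inr ⟨h, Or.inl rfl⟩
        by_cases hak : a = k
        · subst hak
          rw [nbrs_addE_right hjk] at hC
          rcases pair_cases hC haC with h | h
          · exact Or.inl h
          · exact Or.inr ⟨by rw [h, Finset.pair_comm], Or.inr rfl⟩
        · rw [nbrs_addE_other hjk haj hak, insert_empty_eq] at hC
          rcases Finset.subset_singleton_iff.1 hC with rfl | rfl
          · exact absurd haC (notMem_empty _)
          · exact Or.inl rfl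
      rcases pairC with rfl | ⟨rfl, -⟩
      · have hai : a ≠ i := fun h => hiC (h ▸ haC)
        have := key_ineq hn M γ hM0 hMmono hγpos hγ1 hγ2 H hai
          (D := insert i (nbrs g i \ {a})) (mem_insert_self _ _)
        exact absurd hlt (not_lt.2 this)
      · have hij : i ≠ j := fun h => hiC (by simp [h])
        have hik : i ≠ k := fun h => hiC (by simp [h])
        rw [hg, nbrs_addE_other hjk hij hik] at hlt
        simp only [Finset.empty_sdiff, insert_empty_eq] at hlt
        exact absurd hlt (not_lt.2 (H i j k hij hjk hik))
    · rintro j k hadj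
      simp at hadj
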